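/- Let R be an integral domain, let a_1, …, a_n ∈ R and let c ∈ R. Then the determinant of the Vieta matrix of a_1, …, a_n equals the determinant of the Vieta matrix of a_1 − c, a_2 − c, …, a_n − c. -/

import Mathlib

open Polynomial Finset

/-- The Vieta matrix of `a : Fin n → R`: its `(i, j)` entry is the elementary
symmetric polynomial of degree `i` evaluated at the elements `a k` for `k ≠ j`. -/
def vietaMatrix {R : Type*} [CommRing R] (n : ℕ) (a : Fin n → R) :
    Matrix (Fin n) (Fin n) R :=
  Matrix.of fun i j => ((Finset.univ.erase j).val.map a).esymm i

private noncomputable def coeffMatrix {R : Type*} [CommRing R] (n : ℕ) (a : Fin n → R) :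
    Matrix (Fin n) (Fin n) R :=
  Matrix.of fun i j => (∏ k ∈ Finset.univ.erase j, (X + C (a k))).coeff i

private lemma card_erase {n : ℕ} (j : Fin n) :
    ((Finset.univ.erase j)).card = n - 1 := by
  rw [Finset.card_erase_of_mem (Finset.mem_univ j), Finset.card_univ, Fintype.card_fin]

private lemma vieta_eq_coeff {R : Type*} [CommRing R] (n : ℕ) (a : Fin n → R) :
    vietaMatrix n a = (coeffMatrix n a).submatrix ⇑(Fin.revPerm (n := n)) id := by
  ext i j
  have hi : (i : ℕ) ≤ n - 1 := Nat.le_sub_one_of_lt i.isLt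
  have hcard : Multiset.card (Finset.univ.erase j).val = n - 1 := card_erase j
  have h : (n - 1 - (i : ℕ)) ≤ Multiset.card (Finset.univ.erase j).val := by
    rw [hcard]; omega
  have := Multiset.prod_X_add_C_coeff' (Finset.univ.erase j).val a h
  rw [hcard, Nat.sub_sub_self hi] at this
  simp only [vietaMatrix, coeffMatrix, Matrix.submatrix_apply, Matrix.of_apply, id]
  rw [Fin.revPerm_apply, Fin.val_rev, ← this]
  have hidx : n - ((i : ℕ) + 1) = n - 1 - (i : ℕ) := by omega
  rw [hidx]
  rfl

private lemma natDegree_lt {R : Type*} [CommRing R] [Nontrivial R] (n : ℕ) (a : Fin n → R) (j : Fin n)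
    (hn : 1 ≤ n) :
    (∏ k ∈ Finset.univ.erase j, (X + C (a k))).natDegree < n := by
  have : (∏ k ∈ Finset.univ.erase j, (X + C (a k))).natDegree
      = ∑ k ∈ Finset.univ.erase j, (X + C (a k)).natDegree := by
    apply natDegree_prod_of_monic
    intro k _; exact monic_X_add_C _
  rw [this]
  simp only [natDegree_X_add_C, Finset.sum_const, smul_eq_mul, mul_one]
  rw [card_erase j]; omega

private def pascalMatrix {R : Type*} [CommRing R] (n : ℕ) (c : R) :
    Matrix (Fin n) (Fin n) R :=
  Matrix.of fun i k => ((k : ℕ).choose i : R) * (-c) ^ ((k : ℕ) - (i : ℕ))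

private lemma coeff_shift {R : Type*} [CommRing R] [Nontrivial R] (n : ℕ) (hn : 1 ≤ n) (a : Fin n → R)
    (c : R) :
    coeffMatrix n (fun i => a i - c) = pascalMatrix n c * coeffMatrix n a := by
  ext i j
  have hp : (∏ k ∈ Finset.univ.erase j, (X + C (a k - c)))
      = taylor (-c) (∏ k ∈ Finset.univ.erase j, (X + C (a k))) := by
    rw [show taylor (-c) (∏ k ∈ Finset.univ.erase j, (X + C (a k)))
        = taylorAlgHom (-c) (∏ k ∈ Finset.univ.erase j, (X + C (a k))) from rfl,
      map_prod]
    refine Finset.prod_congr rfl fun k _ => ?_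
    simp [coe_taylorAlgHom, taylor_apply, sub_eq_add_neg, add_comm, add_assoc, add_left_comm]
  simp only [coeffMatrix, Matrix.mul_apply, Matrix.of_apply, pascalMatrix, hp]
  set p := ∏ k ∈ Finset.univ.erase j, (X + C (a k)) with hpdef
  have hdeg := natDegree_lt n a j hn
  conv_lhs => rw [p.as_sum_range' n hdeg]
  rw [map_sum]
  rw [finset_sum_coeff]
  rw [Fin.sum_univ_eq_sum_range (fun k => ((k : ℕ).choose i : R) * (-c) ^ (k - (i:ℕ)) * p.coeff k)]
  refine Finset.sum_congr rfl fun k _ => ?_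
  rw [taylor_monomial, coeff_C_mul, coeff_X_add_C_pow]
  ring

private lemma det_pascal {R : Type*} [CommRing R] (n : ℕ) (c : R) :
    (pascalMatrix n c).det = 1 := by
  rw [Matrix.det_of_upperTriangular]
  · rw [Finset.prod_eq_one]
    intro i _
    simp [pascalMatrix]
  · intro i k hk
    have hk' : (k : ℕ) < (i : ℕ) := hk
    simp [pascalMatrix, Nat.choose_eq_zero_of_lt hk']

theorem vieta_det_shift_invariant {R : Type*} [CommRing R] [IsDomain R]
    (n : ℕ) (hn : 1 ≤ n) (a : Fin n → R) (c : R) :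
    (vietaMatrix n a).det = (vietaMatrix n (fun i => a i - c)).det := by
  rw [vieta_eq_coeff, vieta_eq_coeff]
  have h1 : ((coeffMatrix n a).submatrix ⇑(Fin.revPerm (n := n)) id).det
      = Equiv.Perm.sign (Fin.revPerm (n := n)) * (coeffMatrix n a).det :=
    Matrix.det_permute _ _
  have h2 : ((coeffMatrix n (fun i => a i - c)).submatrix ⇑(Fin.revPerm (n := n)) id).det
      = Equiv.Perm.sign (Fin.revPerm (n := n)) * (coeffMatrix n (fun i => a i - c)).det :=
    Matrix.det_permute _ _
  rw [h1, h2, coeff_shift n hn a c, Matrix.det_mul, det_pascal, one_mul]
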